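/- Let n ≥ 1 and let c₁, …, cₙ : ℝ → ℝ be functions each nondecreasing on [0,∞), concave on [0,∞), and satisfying cᵢ(0) = 0. Let ζ > 0 and let t₁, …, tₙ ≥ 0 satisfy ∑_{i=1}^{n} tᵢ ≥ ζ. Then ∑_{i=1}^{n} cᵢ(tᵢ) ≥ min_{1 ≤ i ≤ n} cᵢ(ζ). (Concave cost aggregation lemma: splitting a required total flow ζ across paths with concave per-path cost functions can never cost less than routing all of ζ on the single cheapest path.) -/

import Mathlib

/-- Concave cost aggregation lemma: splitting a required total flow `ζ` across paths
with concave per-path cost functions can never cost less than routing all of `ζ` on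
the single cheapest path. -/
theorem concave_cost_aggregation
    (n : ℕ) (hn : 1 ≤ n) (c : Fin n → ℝ → ℝ)
    (hmono : ∀ i, MonotoneOn (c i) (Set.Ici 0))
    (hconc : ∀ i, ConcaveOn ℝ (Set.Ici 0) (c i))
    (hc0 : ∀ i, c i 0 = 0)
    (ζ : ℝ) (hζ : 0 < ζ)
    (t : Fin n → ℝ) (ht : ∀ i, 0 ≤ t i) (hsum : ζ ≤ ∑ i, t i) :
    Finset.univ.inf' (Finset.univ_nonempty_iff.mpr ⟨⟨0, hn⟩⟩) (fun i => c i ζ) ≤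
      ∑ i, c i (t i) := by
  set S : ℝ := ∑ i, t i with hSdef
  have hS : 0 < S := lt_of_lt_of_le hζ hsum
  set m : ℝ := Finset.univ.inf' (Finset.univ_nonempty_iff.mpr ⟨⟨0, hn⟩⟩)
      (fun i => c i ζ) with hm
  obtain ⟨j, -, hj⟩ := Finset.exists_mem_eq_inf' (Finset.univ_nonempty_iff.mpr ⟨⟨0, hn⟩⟩)
      (fun i => c i ζ)
  have hm0 : 0 ≤ m := by
    rw [hm, hj]
    calc (0:ℝ) = c j 0 := (hc0 j).symm
    _ ≤ c j ζ := hmono j (Set.mem_Ici.mpr le_rfl) (Set.mem_Ici.mpr hζ.le) hζ.le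
  have key : ∀ i, (t i / S) * m ≤ c i (t i) := by
    intro i
    have ha : 0 ≤ t i / S := div_nonneg (ht i) hS.le
    have hb : t i / S ≤ 1 := by
      rw [div_le_one hS]
      exact Finset.single_le_sum (fun i _ => ht i) (Finset.mem_univ i)
    have h2 := (hconc i).2
    have hconv := h2 (x := S) (y := 0) (a := t i / S) (b := 1 - t i / S)
      (Set.mem_Ici.mpr hS.le) (Set.mem_Ici.mpr (le_refl (0:ℝ)))
      ha (by linarith) (by ring)
    have hx : (t i / S) • S + (1 - t i / S) • (0:ℝ) = t i := by
      simp only [smul_eq_mul, mul_zero, add_zero]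
      field_simp
    rw [hx, hc0 i, smul_eq_mul, smul_eq_mul, mul_zero, add_zero] at hconv
    have hmc : m ≤ c i S :=
      le_trans (Finset.inf'_le _ (Finset.mem_univ i))
        (hmono i (Set.mem_Ici.mpr hζ.le) (Set.mem_Ici.mpr hS.le) hsum)
    calc (t i / S) * m ≤ (t i / S) * c i S := by
          exact mul_le_mul_of_nonneg_left hmc ha
      _ ≤ c i (t i) := hconv
  calc m = (∑ i, t i / S) * m := by
        rw [← Finset.sum_div, ← hSdef, div_self hS.ne', one_mul]
    _ = ∑ i, (t i / S) * m := by rw [Finset.sum_mul]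
    _ ≤ ∑ i, c i (t i) := Finset.sum_le_sum (fun i _ => key i)
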